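/- arXiv:2412.17985 — 3 statements merged into one kernel-verified Lean document; each statement's English description precedes it below -/
import Mathlib

section
/- Let A ⊆ ℝⁿ be Borel with Hausdorff dimension dim A > 1. Then for every x ∈ ℝⁿ, the radial projection π_x(A \ {x}) ⊆ S^{n-1} satisfies dim π_x(A \ {x}) ≥ dim A - 1. -/
open MeasureTheory Set
open scoped ENNReal
open Filter
open scoped NNReal Topology

/-- The radial projection `π_x(y) = (y-x)/|y-x|`. -/
noncomputable def radialProj {n : ℕ} (x y : EuclideanSpace ℝ (Fin n)) :
    EuclideanSpace ℝ (Fin n) :=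
  ‖y - x‖⁻¹ • (y - x)

lemma ediam_prod_le {X Y : Type*} [PseudoEMetricSpace X] [PseudoEMetricSpace Y]
    (s : Set X) (t : Set Y) :
    EMetric.diam (s ×ˢ t) ≤ max (EMetric.diam s) (EMetric.diam t) := by
  apply EMetric.diam_le
  rintro ⟨x1, y1⟩ ⟨hx1, hy1⟩ ⟨x2, y2⟩ ⟨hx2, hy2⟩
  rw [Prod.edist_eq]
  exact max_le_max (EMetric.edist_le_diam_of_mem hx1 hx2)
    (EMetric.edist_le_diam_of_mem hy1 hy2)

lemma exists_cover {Y : Type*} [EMetricSpace Y] [MeasurableSpace Y] [BorelSpace Y]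
    {t : Set Y} {d : ℝ} (ht : μH[d] t = 0) {r ε : ℝ≥0∞} (hr : 0 < r) (hε : 0 < ε) :
    ∃ U : ℕ → Set Y, (t ⊆ ⋃ n, U n) ∧ (∀ n, EMetric.diam (U n) ≤ r) ∧
      ∑' n, ⨆ _ : (U n).Nonempty, EMetric.diam (U n) ^ d < ε := by
  have h := (MeasureTheory.Measure.hausdorffMeasure_apply d t)
  rw [ht] at h
  have h2 : (⨅ (U : ℕ → Set Y) (_ : t ⊆ ⋃ n, U n) (_ : ∀ n, EMetric.diam (U n) ≤ r),
      ∑' n, ⨆ _ : (U n).Nonempty, EMetric.diam (U n) ^ d) < ε := by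
    refine lt_of_le_of_lt (le_trans ?_ h.symm.le) hε
    exact le_iSup₂ (f := fun (r' : ℝ≥0∞) (_ : 0 < r') =>
      ⨅ (U : ℕ → Set Y) (_ : t ⊆ ⋃ n, U n) (_ : ∀ n, EMetric.diam (U n) ≤ r'),
        ∑' n, ⨆ _ : (U n).Nonempty, EMetric.diam (U n) ^ d) r hr
  obtain ⟨U, hU⟩ := iInf_lt_iff.1 h2
  obtain ⟨h1, hU⟩ := iInf_lt_iff.1 hU
  obtain ⟨h2', hU⟩ := iInf_lt_iff.1 hU
  exact ⟨U, h1, h2', hU⟩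

lemma prod_Icc_hausdorff_zero {Y : Type*} [EMetricSpace Y] [MeasurableSpace Y] [BorelSpace Y]
    [SecondCountableTopology Y]
    (a b : ℝ) {t : Set Y} {d : ℝ≥0} (hd : 0 < d) (ht : μH[(d : ℝ)] t = 0) :
    μH[(d : ℝ) + 1] ((Icc a b ×ˢ t : Set (ℝ × Y))) = 0 := by
  rcases lt_or_ge b a with hab | hab
  · rw [Icc_eq_empty hab.not_ge, empty_prod, measure_empty]
  have hd' : (0:ℝ) < (d:ℝ) := hd
  -- constants
  set q : ℝ≥0∞ := (ENNReal.ofReal 2⁻¹) ^ (d : ℝ) with hq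
  have hq1 : q < 1 := by
    rw [hq]
    refine ENNReal.rpow_lt_one ?_ hd'
    rw [ENNReal.ofReal_lt_one]; norm_num
  set K : ℝ≥0∞ := (1 - q)⁻¹ with hK
  have hKtop : K ≠ ∞ := by
    rw [hK, Ne, ENNReal.inv_eq_top, tsub_eq_zero_iff_le]
    exact hq1.not_ge
  set C : ℝ≥0∞ := ENNReal.ofReal (b - a + 2) with hC
  set M : ℝ≥0∞ := C * (1 + K) with hM
  have hMtop : M ≠ ∞ := ENNReal.mul_ne_top ENNReal.ofReal_ne_top
    (by simp [ENNReal.add_ne_top, hKtop])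
  have key : ∀ ε : ℝ, 0 < ε → ε ≤ 1 → μH[(d:ℝ)+1] ((Icc a b ×ˢ t : Set (ℝ × Y))) ≤
      M * ENNReal.ofReal ε := by
    intro ε hε hε1
    set c : ℝ := ε ^ (1/(d:ℝ)) with hc
    have hcpos : 0 < c := Real.rpow_pos_of_pos hε _
    -- covers of t
    have hcov : ∀ k : ℕ, ∃ U : ℕ → Set Y, (t ⊆ ⋃ m, U m) ∧
        (∀ m, EMetric.diam (U m) ≤ ENNReal.ofReal (1/((k:ℝ)+1))) ∧
        ∑' m, ⨆ _ : (U m).Nonempty, EMetric.diam (U m) ^ (d:ℝ) < ENNReal.ofReal ε :=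
      fun k => exists_cover ht (by positivity) (by positivity)
    choose U hUcov hUdiam hUsum using hcov
    set η : ℕ → ℕ → ℝ := fun k j => min (1/((k:ℝ)+1)) (c * 2⁻¹ ^ j) with hη
    have hηpos : ∀ k j, 0 < η k j := fun k j => lt_min (by positivity) (by positivity)
    set w : ℕ → ℕ → ℝ := fun k j => max (EMetric.diam (U k j)).toReal (η k j) with hw
    have hwpos : ∀ k j, 0 < w k j := fun k j => lt_max_of_lt_right (hηpos k j)
    have hwle : ∀ k j, w k j ≤ 1/((k:ℝ)+1) := by
      intro k j
      refine max_le ?_ (min_le_left _ _)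
      exact ENNReal.toReal_le_of_le_ofReal (by positivity) (hUdiam k j)
    have hwle1 : ∀ k j, w k j ≤ 1 := fun k j => (hwle k j).trans (by
      rw [div_le_one (by positivity)]; linarith [Nat.cast_nonneg (α := ℝ) k])
    have hdiamw : ∀ k j, EMetric.diam (U k j) ≤ ENNReal.ofReal (w k j) := by
      intro k j
      have hne : EMetric.diam (U k j) ≠ ∞ :=
        ((hUdiam k j).trans_lt ENNReal.ofReal_lt_top).ne
      calc EMetric.diam (U k j) = ENNReal.ofReal (EMetric.diam (U k j)).toReal :=
            (ENNReal.ofReal_toReal hne).symm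
        _ ≤ ENNReal.ofReal (w k j) := ENNReal.ofReal_le_ofReal (le_max_left _ _)
    -- the product covers
    set V : ℕ → ℕ × ℕ → Set (ℝ × Y) := fun k p =>
      (Icc (a + p.2 * w k p.1) (a + (p.2 + 1) * w k p.1) ∩ Icc a b) ×ˢ U k p.1 with hV
    have hVdiam : ∀ k p, EMetric.diam (V k p) ≤ ENNReal.ofReal (w k p.1) := by
      intro k p
      refine (ediam_prod_le _ _).trans (max_le ?_ (hdiamw k p.1))
      refine (EMetric.diam_mono inter_subset_left).trans ?_
      rw [Real.ediam_Icc]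
      exact ENNReal.ofReal_le_ofReal (le_of_eq (by ring))
    have hVdiam' : ∀ k p, EMetric.diam (V k p) ≤ ENNReal.ofReal (1/((k:ℝ)+1)) :=
      fun k p => (hVdiam k p).trans (ENNReal.ofReal_le_ofReal (hwle k p.1))
    have hVcov : ∀ k, (Icc a b ×ˢ t : Set (ℝ × Y)) ⊆ ⋃ p, V k p := by
      intro k
      rintro ⟨s, y⟩ ⟨hs, hy⟩
      obtain ⟨j, hj⟩ := mem_iUnion.1 (hUcov k hy)
      have h0 : (0:ℝ) ≤ (s - a) / w k j := div_nonneg (by linarith [hs.1]) (hwpos k j).le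
      refine mem_iUnion.2 ⟨(j, ⌊(s - a) / w k j⌋₊), ⟨⟨?_, ?_⟩, hs⟩, hj⟩
      · have := Nat.floor_le h0
        rw [le_div_iff₀ (hwpos k j)] at this
        simpa using by linarith
      · have := Nat.lt_floor_add_one ((s - a) / w k j)
        rw [div_lt_iff₀ (hwpos k j)] at this
        simpa using by linarith
    -- apply the liminf bound
    have hr0 : Tendsto (fun k : ℕ => ENNReal.ofReal (1/((k:ℝ)+1))) atTop (𝓝 0) := by
      rw [show (0:ℝ≥0∞) = ENNReal.ofReal 0 by simp]
      exact ENNReal.tendsto_ofReal tendsto_one_div_add_atTop_nhds_zero_nat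
    have hmain := MeasureTheory.Measure.hausdorffMeasure_le_liminf_tsum ((d:ℝ)+1)
      (Icc a b ×ˢ t : Set (ℝ × Y)) (fun k : ℕ => ENNReal.ofReal (1/((k:ℝ)+1))) hr0 V
      (Eventually.of_forall fun k p => hVdiam' k p)
      (Eventually.of_forall hVcov)
    refine hmain.trans ?_
    -- bound each sum
    have hsum : ∀ k, ∑' p : ℕ × ℕ, EMetric.diam (V k p) ^ ((d:ℝ)+1) ≤ M * ENNReal.ofReal ε := by
      intro k
      rw [show ∑' (p : ℕ × ℕ), EMetric.diam (V k p) ^ ((d:ℝ) + 1)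
          = ∑' (j : ℕ) (i : ℕ), EMetric.diam (V k (j, i)) ^ ((d:ℝ) + 1) from ENNReal.tsum_prod (f := fun j i => EMetric.diam (V k (j, i)) ^ ((d:ℝ) + 1))]
      have hj : ∀ j : ℕ, (∑' i : ℕ, EMetric.diam (V k (j, i)) ^ ((d:ℝ)+1)) ≤
          C * ((⨆ _ : (U k j).Nonempty, EMetric.diam (U k j) ^ (d:ℝ)) +
            ENNReal.ofReal (η k j) ^ (d:ℝ)) := by
        intro j
        have hdne : EMetric.diam (U k j) ≠ ∞ :=
          ((hUdiam k j).trans_lt ENNReal.ofReal_lt_top).ne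
        by_cases hne : (U k j).Nonempty
        · set N : ℕ := ⌊(b - a)/(w k j)⌋₊ + 1 with hN
          have hzero : ∀ i : ℕ, i ∉ Finset.range N →
              EMetric.diam (V k (j,i)) ^ ((d:ℝ)+1) = 0 := by
            intro i hi
            rw [Finset.mem_range, not_lt] at hi
            have h1 : (b - a) / w k j < i := by
              refine (Nat.floor_lt (div_nonneg (by linarith) (hwpos k j).le)).1 ?_
              omega
            have h2 : b - a < i * w k j := by
              rw [div_lt_iff₀ (hwpos k j)] at h1; linarith
            have hempt : V k (j, i) = ∅ := by
              apply eq_empty_of_forall_notMem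
              rintro ⟨s, y⟩ ⟨⟨⟨hsl, -⟩, -, hsr⟩, -⟩
              simp only at hsl hsr h2
              linarith
            rw [hempt, EMetric.diam, EMetric.diam_empty]
            exact ENNReal.zero_rpow_of_pos (by positivity)
          rw [tsum_eq_sum hzero]
          have hterm : ∀ i ∈ Finset.range N, EMetric.diam (V k (j,i)) ^ ((d:ℝ)+1) ≤
              ENNReal.ofReal (w k j) ^ ((d:ℝ)+1) := fun i _ =>
            ENNReal.rpow_le_rpow (hVdiam k (j,i)) (by positivity)
          refine (Finset.sum_le_card_nsmul _ _ _ hterm).trans ?_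
          rw [Finset.card_range, nsmul_eq_mul]
          have hwne0 : ENNReal.ofReal (w k j) ≠ 0 := by
            simp [ENNReal.ofReal_eq_zero, (hwpos k j).not_ge]
          have hsplit : ENNReal.ofReal (w k j) ^ ((d:ℝ)+1) =
              ENNReal.ofReal (w k j) * ENNReal.ofReal (w k j) ^ (d:ℝ) := by
            rw [ENNReal.rpow_add _ _ hwne0 ENNReal.ofReal_ne_top, ENNReal.rpow_one, mul_comm]
          rw [hsplit, ← mul_assoc]
          have hNw : (N : ℝ≥0∞) * ENNReal.ofReal (w k j) ≤ C := by
            rw [← ENNReal.ofReal_natCast, ← ENNReal.ofReal_mul (by positivity)]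
            apply ENNReal.ofReal_le_ofReal
            have hfl : (⌊(b - a)/(w k j)⌋₊ : ℝ) ≤ (b-a)/(w k j) :=
              Nat.floor_le (div_nonneg (by linarith) (hwpos k j).le)
            have hN' : (N:ℝ) ≤ (b-a)/(w k j) + 1 := by rw [hN]; push_cast; linarith
            have h3 : (N:ℝ) * w k j ≤ ((b-a)/(w k j) + 1) * w k j :=
              mul_le_mul_of_nonneg_right hN' (hwpos k j).le
            rw [add_mul, one_mul, div_mul_cancel₀ _ (hwpos k j).ne'] at h3
            have := hwle1 k j
            linarith
          have hwd : ENNReal.ofReal (w k j) ^ (d:ℝ) ≤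
              (⨆ _ : (U k j).Nonempty, EMetric.diam (U k j) ^ (d:ℝ)) +
                ENNReal.ofReal (η k j) ^ (d:ℝ) := by
            rcases le_total (EMetric.diam (U k j)).toReal (η k j) with h | h
            · rw [show w k j = η k j from max_eq_right h]
              exact le_add_left le_rfl
            · rw [show w k j = (EMetric.diam (U k j)).toReal from max_eq_left h,
                ENNReal.ofReal_toReal hdne, iSup_pos hne]
              exact le_add_right le_rfl
          exact mul_le_mul' hNw hwd
        · have hUe : U k j = ∅ := not_nonempty_iff_eq_empty.1 hne
          have hVe : ∀ i : ℕ, V k (j, i) = ∅ := by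
            intro i; show _ ×ˢ _ = ∅; rw [hUe, prod_empty]
          simp only [hVe, EMetric.diam, EMetric.diam_empty]
          rw [ENNReal.zero_rpow_of_pos (by positivity), tsum_zero]
          exact zero_le
      have hgeom : ∑' j : ℕ, ENNReal.ofReal (η k j) ^ (d:ℝ) ≤ ENNReal.ofReal ε * K := by
        have hterm : ∀ j : ℕ, ENNReal.ofReal (η k j) ^ (d:ℝ) ≤ ENNReal.ofReal ε * q ^ j := by
          intro j
          have h1 : ENNReal.ofReal (η k j) ≤ ENNReal.ofReal (c * 2⁻¹ ^ j) :=
            ENNReal.ofReal_le_ofReal (min_le_right _ _)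
          refine (ENNReal.rpow_le_rpow h1 hd'.le).trans ?_
          rw [ENNReal.ofReal_mul hcpos.le, ENNReal.ofReal_pow (by norm_num),
            ENNReal.mul_rpow_of_nonneg _ _ hd'.le]
          have h2 : (ENNReal.ofReal c) ^ (d:ℝ) = ENNReal.ofReal ε := by
            rw [ENNReal.ofReal_rpow_of_pos hcpos, hc, ← Real.rpow_mul hε.le,
              one_div, inv_mul_cancel₀ hd'.ne', Real.rpow_one]
          have h3 : ((ENNReal.ofReal 2⁻¹) ^ j) ^ (d:ℝ) = q ^ j := by
            rw [← ENNReal.rpow_natCast (ENNReal.ofReal 2⁻¹) j, ← ENNReal.rpow_mul, mul_comm,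
              ENNReal.rpow_mul, ENNReal.rpow_natCast]
          rw [h2, h3]
        refine (ENNReal.tsum_le_tsum hterm).trans ?_
        rw [ENNReal.tsum_mul_left, ENNReal.tsum_geometric]
      calc ∑' j, ∑' i, EMetric.diam (V k (j, i)) ^ ((d:ℝ)+1)
          ≤ ∑' j, C * ((⨆ _ : (U k j).Nonempty, EMetric.diam (U k j) ^ (d:ℝ)) +
              ENNReal.ofReal (η k j) ^ (d:ℝ)) := ENNReal.tsum_le_tsum hj
        _ = C * ((∑' j, ⨆ _ : (U k j).Nonempty, EMetric.diam (U k j) ^ (d:ℝ)) +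
              ∑' j, ENNReal.ofReal (η k j) ^ (d:ℝ)) := by
            rw [ENNReal.tsum_mul_left, ENNReal.tsum_add]
        _ ≤ C * (ENNReal.ofReal ε + ENNReal.ofReal ε * K) := by
            exact mul_le_mul' le_rfl (add_le_add (hUsum k).le hgeom)
        _ = M * ENNReal.ofReal ε := by rw [hM]; ring
    calc liminf (fun k => ∑' p : ℕ × ℕ, EMetric.diam (V k p) ^ ((d:ℝ)+1)) atTop
        ≤ liminf (fun _ : ℕ => M * ENNReal.ofReal ε) atTop :=
          liminf_le_liminf (Eventually.of_forall hsum)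
      _ = M * ENNReal.ofReal ε := liminf_const _
  -- conclude
  have hlim : Tendsto (fun m : ℕ => M * ENNReal.ofReal (1/((m:ℝ)+1))) atTop (𝓝 0) := by
    have h0 : Tendsto (fun m : ℕ => ENNReal.ofReal (1/((m:ℝ)+1))) atTop (𝓝 0) := by
      rw [show (0:ℝ≥0∞) = ENNReal.ofReal 0 by simp]
      exact ENNReal.tendsto_ofReal tendsto_one_div_add_atTop_nhds_zero_nat
    simpa using ENNReal.Tendsto.const_mul h0 (Or.inr hMtop)
  have hle : μH[(d:ℝ)+1] ((Icc a b ×ˢ t : Set (ℝ × Y))) ≤ 0 := by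
    refine ge_of_tendsto' hlim fun m => key (1/((m:ℝ)+1)) (by positivity) ?_
    rw [div_le_one (by positivity)]; linarith [Nat.cast_nonneg (α := ℝ) m]
  exact le_antisymm hle zero_le

lemma dimH_prod_Icc_le {Y : Type*} [EMetricSpace Y] [MeasurableSpace Y] [BorelSpace Y]
    [SecondCountableTopology Y] (a b : ℝ) (t : Set Y) :
    dimH ((Icc a b ×ˢ t : Set (ℝ × Y))) ≤ 1 + dimH t := by
  refine dimH_le fun d' hd' => ?_
  by_contra hlt
  push_neg at hlt
  obtain ⟨e, h1, h2⟩ := ENNReal.lt_iff_exists_nnreal_btwn.1 hlt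
  have he1 : (1:ℝ≥0) ≤ e := by
    have h0 : (1:ℝ≥0∞) ≤ 1 + dimH t := le_add_right le_rfl
    exact_mod_cast h0.trans h1.le
  set d : ℝ≥0 := e - 1 with hdd
  have hde : e = d + 1 := (tsub_add_cancel_of_le he1).symm
  have hdt : dimH t < (d : ℝ≥0∞) := by
    have h3 : dimH t + 1 < (d:ℝ≥0∞) + 1 := by
      rw [add_comm] at h1
      convert h1 using 2
      rw [hde]; push_cast; ring
    exact (ENNReal.add_lt_add_iff_right (by simp)).1 h3
  have hd0 : 0 < d := by
    rcases eq_or_ne d 0 with h | h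
    · rw [h] at hdt; simp at hdt
    · exact pos_iff_ne_zero.2 h
  have hm := prod_Icc_hausdorff_zero a b hd0 (hausdorffMeasure_of_dimH_lt hdt)
  have hlt2 : ((d:ℝ)) + 1 < ((d' : ℝ≥0) : ℝ) := by
    have h4 : e < d' := by exact_mod_cast h2
    have h5 : (e:ℝ) < (d':ℝ) := h4
    rw [hde] at h5; push_cast at h5; linarith
  rcases MeasureTheory.Measure.hausdorffMeasure_zero_or_top hlt2 (Icc a b ×ˢ t : Set (ℝ × Y)) with h | h
  · exact absurd (hd'.symm.trans h) (by simp)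
  · exact absurd (hm.symm.trans h) (by simp)

theorem radial_projection_dim_lower' {n : ℕ} (A : Set (EuclideanSpace ℝ (Fin n)))
    (x : EuclideanSpace ℝ (Fin n)) :
    dimH (radialProj x '' (A \ {x})) ≥ dimH A - 1 := by
  let E := EuclideanSpace ℝ (Fin n)
  set B : Set E := radialProj x '' (A \ {x}) with hB
  have hnorm : ∀ z ∈ B, ‖z‖ = 1 := by
    rintro _ ⟨y, ⟨-, hy⟩, rfl⟩
    have hyx : y - x ≠ 0 := sub_ne_zero.2 (by simpa using hy)
    rw [radialProj, norm_smul, norm_inv, norm_norm,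
      inv_mul_cancel₀ (norm_ne_zero_iff.2 hyx)]
  set g : ℝ × E → E := fun p => x + p.1 • p.2 with hg
  have hlip : ∀ m : ℕ, LipschitzOnWith ((m:ℝ≥0) + 1) g ((Icc (0:ℝ) m ×ˢ B : Set (ℝ × E))) := by
    intro m
    rw [lipschitzOnWith_iff_dist_le_mul]
    rintro ⟨s, z⟩ ⟨hs, hz⟩ ⟨s', z'⟩ ⟨hs', hz'⟩
    have hzz : ‖z'‖ = 1 := hnorm z' hz'
    have h1 : g (s, z) - g (s', z') = s • (z - z') + (s - s') • z' := by
      simp only [hg]; module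
    rw [dist_eq_norm, h1, Prod.dist_eq]
    calc ‖s • (z - z') + (s - s') • z'‖ ≤ ‖s • (z - z')‖ + ‖(s - s') • z'‖ := norm_add_le _ _
      _ = |s| * ‖z - z'‖ + |s - s'| * 1 := by rw [norm_smul, norm_smul, Real.norm_eq_abs,
          Real.norm_eq_abs, hzz]
      _ ≤ (m:ℝ) * dist z z' + dist s s' := by
          rw [mul_one, dist_eq_norm, Real.dist_eq]
          have : |s| ≤ (m:ℝ) := abs_le.2 ⟨by linarith [hs.1, Nat.cast_nonneg (α := ℝ) m], hs.2⟩
          exact add_le_add (mul_le_mul_of_nonneg_right this (norm_nonneg _)) le_rfl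
      _ ≤ (m:ℝ) * max (dist s s') (dist z z') + max (dist s s') (dist z z') := by
          have h2 : dist z z' ≤ max (dist s s') (dist z z') := le_max_right _ _
          have h3 : dist s s' ≤ max (dist s s') (dist z z') := le_max_left _ _
          have := Nat.cast_nonneg (α := ℝ) m
          nlinarith
      _ = ((m:ℝ≥0) + 1 : ℝ≥0) * dist (s, z) (s', z') := by
          rw [Prod.dist_eq]; push_cast; ring
  have hcover : A ⊆ {x} ∪ ⋃ m : ℕ, g '' ((Icc (0:ℝ) m ×ˢ B : Set (ℝ × E))) := by
    intro y hy
    rcases eq_or_ne y x with rfl | hyx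
    · exact Or.inl rfl
    refine Or.inr (mem_iUnion.2 ⟨⌈‖y - x‖⌉₊, ⟨(‖y - x‖, radialProj x y),
      ⟨⟨norm_nonneg _, Nat.le_ceil _⟩, ⟨y, ⟨hy, by simpa using hyx⟩, rfl⟩⟩, ?_⟩⟩)
    show x + ‖y - x‖ • (‖y - x‖⁻¹ • (y - x)) = y
    rw [smul_smul, mul_inv_cancel₀ (norm_ne_zero_iff.2 (sub_ne_zero.2 hyx)), one_smul]
    abel
  have key : dimH A ≤ 1 + dimH B := by
    calc dimH A ≤ dimH ({x} ∪ ⋃ m : ℕ, g '' ((Icc (0:ℝ) m ×ˢ B : Set (ℝ × E)))) :=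
          dimH_mono hcover
      _ = max (dimH ({x} : Set E)) (dimH (⋃ m : ℕ, g '' ((Icc (0:ℝ) m ×ˢ B : Set (ℝ × E))))) :=
          dimH_union _ _
      _ ≤ 1 + dimH B := by
          rw [dimH_singleton, dimH_iUnion]
          refine max_le zero_le (iSup_le fun m => ?_)
          calc dimH (g '' ((Icc (0:ℝ) m ×ˢ B : Set (ℝ × E))))
              ≤ dimH ((Icc (0:ℝ) m ×ˢ B : Set (ℝ × E))) := (hlip m).dimH_image_le
            _ ≤ 1 + dimH B := dimH_prod_Icc_le _ _ _
  rw [ge_iff_le, tsub_le_iff_right, add_comm]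
  exact key

/-- If `A ⊆ ℝⁿ` is Borel with `dim A > 1`, then for every `x`,
`dim π_x(A \ {x}) ≥ dim A - 1`. -/
theorem radial_projection_dim_lower {n : ℕ} (A : Set (EuclideanSpace ℝ (Fin n)))
    (hA : MeasurableSet A) (hdim : 1 < dimH A) (x : EuclideanSpace ℝ (Fin n)) :
    dimH (radialProj x '' (A \ {x})) ≥ dimH A - 1 :=
  radial_projection_dim_lower' A x
end

section
/- There exist compact sets X, Y ⊆ ℝ with dim X = dim Y = 0 whose difference set X - Y := {x - y : x ∈ X, y ∈ Y} contains an interval (in fact contains [0,1]). -/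
open MeasureTheory Set
open scoped ENNReal

open Filter
open scoped Topology

noncomputable def valB (a : ℕ → Bool) : ℝ := ∑' n, cond (a n) ((2:ℝ)⁻¹ ^ (n+1)) 0

lemma fB_nonneg (a : ℕ → Bool) (n : ℕ) : 0 ≤ cond (a n) ((2:ℝ)⁻¹ ^ (n+1)) 0 := by
  cases a n <;> simp <;> positivity

lemma fB_le (a : ℕ → Bool) (n : ℕ) : cond (a n) ((2:ℝ)⁻¹ ^ (n+1)) 0 ≤ (2:ℝ)⁻¹ ^ (n+1) := by
  cases a n <;> simp <;> positivity

lemma summable_w : Summable (fun n : ℕ => (2:ℝ)⁻¹ ^ (n+1)) := by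
  have := summable_geometric_of_lt_one (by norm_num : (0:ℝ) ≤ 2⁻¹) (by norm_num : (2:ℝ)⁻¹ < 1)
  simpa [pow_succ, mul_comm] using this.mul_left 2⁻¹

lemma summable_fB (a : ℕ → Bool) :
    Summable (fun n => cond (a n) ((2:ℝ)⁻¹ ^ (n+1)) 0) :=
  Summable.of_nonneg_of_le (fB_nonneg a) (fB_le a) summable_w

lemma continuous_valB : Continuous valB := by
  apply continuous_tsum (u := fun n : ℕ => (2:ℝ)⁻¹ ^ (n+1))
  · intro n
    exact (continuous_of_discreteTopology (f := fun b : Bool => cond b ((2:ℝ)⁻¹ ^ (n+1)) 0)).comp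
      (continuous_apply n)
  · exact summable_w
  · intro n a
    rw [Real.norm_eq_abs, abs_of_nonneg (fB_nonneg a n)]
    exact fB_le a n

noncomputable def DSet (P : ℕ → Prop) : Set ℝ := valB '' {a | ∀ n, ¬ P n → a n = false}

lemma isCompact_DSet (P : ℕ → Prop) : IsCompact (DSet P) := by
  have hcl : IsClosed {a : ℕ → Bool | ∀ n, ¬ P n → a n = false} := by
    have : {a : ℕ → Bool | ∀ n, ¬ P n → a n = false}
        = ⋂ n, ⋂ (_ : ¬ P n), (fun a : ℕ → Bool => a n) ⁻¹' {false} := by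
      ext a; simp [Set.mem_iInter]
    rw [this]
    exact isClosed_iInter fun n => isClosed_iInter fun _ =>
      (isClosed_singleton).preimage (continuous_apply n)
  exact (hcl.isCompact).image continuous_valB


lemma tsum_w_tail (N : ℕ) : ∑' i : ℕ, (2:ℝ)⁻¹ ^ (i + N + 1) = (2:ℝ)⁻¹ ^ N := by
  have h : ∀ i : ℕ, (2:ℝ)⁻¹ ^ (i + N + 1) = (2:ℝ)⁻¹ ^ (N+1) * (2:ℝ)⁻¹ ^ i := by
    intro i; rw [← pow_add]; ring_nf
  rw [tsum_congr h, tsum_mul_left,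
    tsum_geometric_of_lt_one (by norm_num) (by norm_num : (2:ℝ)⁻¹ < 1)]
  norm_num [pow_succ]
  ring

lemma partial_le_valB (a : ℕ → Bool) (N : ℕ) :
    ∑ n ∈ Finset.range N, cond (a n) ((2:ℝ)⁻¹ ^ (n+1)) 0 ≤ valB a :=
  Summable.sum_le_tsum _ (fun n _ => fB_nonneg a n) (summable_fB a)

lemma valB_le_partial (a : ℕ → Bool) (N : ℕ) :
    valB a ≤ (∑ n ∈ Finset.range N, cond (a n) ((2:ℝ)⁻¹ ^ (n+1)) 0) + (2:ℝ)⁻¹ ^ N := by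
  rw [valB, ← Summable.sum_add_tsum_nat_add N (summable_fB a)]
  gcongr
  calc ∑' i : ℕ, cond (a (i + N)) ((2:ℝ)⁻¹ ^ (i + N + 1)) 0
      ≤ ∑' i : ℕ, (2:ℝ)⁻¹ ^ (i + N + 1) := by
        apply Summable.tsum_le_tsum (fun i => fB_le a _) ((summable_fB a).comp_injective (add_left_injective N)) ?_
        · exact summable_w.comp_injective (add_left_injective N)
    _ = (2:ℝ)⁻¹ ^ N := tsum_w_tail N


lemma rpow_two_tendsto_zero {e : ℕ → ℝ} (he : Tendsto e atTop atBot) :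
    Tendsto (fun k => (2:ℝ) ^ (e k)) atTop (𝓝 0) := by
  have h2 : ∀ k, (2:ℝ) ^ (e k) = Real.exp (Real.log 2 * e k) := fun k =>
    Real.rpow_def_of_pos two_pos (e k)
  simp only [h2]
  exact Real.tendsto_exp_atBot.comp (he.const_mul_atBot (Real.log_pos one_lt_two))

lemma dimH_DSet_eq_zero (P : ℕ → Prop) [DecidablePred P] (M B : ℕ → ℕ)
    (hM : Tendsto M atTop atTop)
    (hcount : ∀ k, ((Finset.range (M k)).filter P).card ≤ B k)
    (hMB : ∀ d : ℝ, 0 < d → Tendsto (fun k => (B k : ℝ) - d * (M k : ℝ)) atTop atBot) :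
    dimH (DSet P) = 0 := by
  refine le_antisymm (dimH_le fun d' hinf => ?_) zero_le
  by_contra hd'
  have hd0 : d' ≠ 0 := fun h => hd' (by simp [h])
  have hd : 0 < (d' : ℝ) := by
    have := zero_lt_iff.mpr hd0
    exact_mod_cast this
  -- covering data
  set F : ℕ → Finset ℕ := fun k => (Finset.range (M k)).filter P with hF
  set len : ℕ → ℝ := fun k => (2:ℝ)⁻¹ ^ (M k) with hlen
  have hlenpos : ∀ k, 0 < len k := fun k => by positivity
  set t : ∀ k : ℕ, ({x // x ∈ F k} → Bool) → Set ℝ := fun k b =>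
    Icc (∑ n ∈ (F k).attach, cond (b n) ((2:ℝ)⁻¹ ^ ((n:ℕ)+1)) 0)
        ((∑ n ∈ (F k).attach, cond (b n) ((2:ℝ)⁻¹ ^ ((n:ℕ)+1)) 0) + len k) with ht
  have hdiam : ∀ k b, Metric.ediam (t k b) = ENNReal.ofReal (len k) := by
    intro k b
    rw [ht]
    simp [Real.ediam_Icc]
  have key := MeasureTheory.Measure.hausdorffMeasure_le_liminf_sum ((d':ℝ)) (DSet P)
      (l := atTop) (fun k => ENNReal.ofReal (len k)) ?_ t ?_ ?_
  · -- evaluate the liminf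
    have hsum : ∀ k, (∑ b : {x // x ∈ F k} → Bool, Metric.ediam (t k b) ^ (d':ℝ))
        = ENNReal.ofReal ((2:ℝ) ^ ((F k).card : ℝ) * (len k) ^ (d':ℝ)) := by
      intro k
      rw [Finset.sum_congr rfl (fun b _ => by rw [hdiam k b])]
      rw [Finset.sum_const, Finset.card_univ]
      have hcard : Fintype.card ({x // x ∈ F k} → Bool) = 2 ^ (F k).card := by
        simp [Fintype.card_fun]
      rw [hcard, nsmul_eq_mul, ENNReal.ofReal_rpow_of_pos (hlenpos k),
        ← ENNReal.ofReal_natCast (2 ^ (F k).card),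
        ← ENNReal.ofReal_mul (by positivity)]
      congr 1
      push_cast
      rw [Real.rpow_natCast]
    have hzero : Tendsto (fun k => ∑ b : {x // x ∈ F k} → Bool, Metric.ediam (t k b) ^ (d':ℝ))
        atTop (𝓝 0) := by
      simp only [hsum]
      rw [show (0:ℝ≥0∞) = ENNReal.ofReal 0 by simp]
      apply ENNReal.tendsto_ofReal
      have heq : ∀ k, (2:ℝ) ^ ((F k).card : ℝ) * (len k) ^ (d':ℝ)
          = (2:ℝ) ^ (((F k).card : ℝ) - (d':ℝ) * (M k : ℝ)) := by
        intro k
        have hinv : ((2:ℝ)⁻¹ ^ (M k)) = (2:ℝ) ^ (-(M k : ℝ)) := by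
          rw [Real.rpow_neg (by norm_num : (0:ℝ) ≤ 2), Real.rpow_natCast, ← inv_pow]
        show (2:ℝ) ^ (((F k).card : ℕ) : ℝ) * ((2:ℝ)⁻¹ ^ (M k)) ^ (d':ℝ) = _
        rw [hinv, ← Real.rpow_mul (by norm_num), ← Real.rpow_add two_pos]
        congr 1
        ring
      simp only [heq]
      apply rpow_two_tendsto_zero
      apply tendsto_atBot_mono (fun k => ?_) (hMB (d':ℝ) hd)
      have := hcount k
      have : ((F k).card : ℝ) ≤ (B k : ℝ) := by exact_mod_cast this
      linarith
    rw [hzero.liminf_eq] at key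
    have : μH[(d':ℝ)] (DSet P) = 0 := le_antisymm (by simpa using key) zero_le
    exact absurd (hinf.symm.trans this) ENNReal.top_ne_zero
  · -- r tends to 0
    rw [show (0:ℝ≥0∞) = ENNReal.ofReal 0 by simp]
    exact ENNReal.tendsto_ofReal <|
      (tendsto_pow_atTop_nhds_zero_of_lt_one (by norm_num) (by norm_num : (2:ℝ)⁻¹ < 1)).comp hM
  · -- diam bound
    filter_upwards with k
    intro b
    rw [hdiam]
  · -- covering
    filter_upwards with k
    rintro x ⟨a, ha, rfl⟩
    refine Set.mem_iUnion.2 ⟨fun n => a n, ?_⟩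
    rw [ht]
    constructor
    · -- lower bound
      have : ∑ n ∈ (F k).attach, cond (a n) ((2:ℝ)⁻¹ ^ ((n:ℕ)+1)) 0
          = ∑ n ∈ Finset.range (M k), cond (a n) ((2:ℝ)⁻¹ ^ (n+1)) 0 := by
        rw [Finset.sum_attach (F k) (fun n => cond (a n) ((2:ℝ)⁻¹ ^ (n+1)) 0)]
        apply Finset.sum_filter_of_ne
        intro n _ hne
        by_contra hP
        rw [ha n hP] at hne
        simp at hne
      rw [this]
      exact partial_le_valB a (M k)
    · have : ∑ n ∈ (F k).attach, cond (a n) ((2:ℝ)⁻¹ ^ ((n:ℕ)+1)) 0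
          = ∑ n ∈ Finset.range (M k), cond (a n) ((2:ℝ)⁻¹ ^ (n+1)) 0 := by
        rw [Finset.sum_attach (F k) (fun n => cond (a n) ((2:ℝ)⁻¹ ^ (n+1)) 0)]
        apply Finset.sum_filter_of_ne
        intro n _ hne
        by_contra hP
        rw [ha n hP] at hne
        simp at hne
      rw [this, hlen]
      exact valB_le_partial a (M k)


def blockIdx (n : ℕ) : ℕ := Nat.sqrt (Nat.log 2 (n+1))

lemma le_blockIdx_iff (j n : ℕ) : j ≤ blockIdx n ↔ 2 ^ (j*j) ≤ n + 1 := by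
  rw [blockIdx, Nat.le_sqrt, Nat.le_log_iff_pow_le one_lt_two (Nat.succ_ne_zero n)]

-- the even blocks
def PX (n : ℕ) : Prop := Even (blockIdx n)
instance : DecidablePred PX := fun n => by unfold PX; infer_instance

lemma countX (k : ℕ) :
    ((Finset.range (2 ^ ((2*k+2)*(2*k+2)) - 1)).filter PX).card ≤ 2 ^ ((2*k+1)*(2*k+1)) - 1 := by
  have : (Finset.range (2 ^ ((2*k+2)*(2*k+2)) - 1)).filter PX
      ⊆ Finset.range (2 ^ ((2*k+1)*(2*k+1)) - 1) := by
    intro n hn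
    rw [Finset.mem_filter, Finset.mem_range] at hn
    obtain ⟨hlt, hP⟩ := hn
    rw [Finset.mem_range]
    have h1 : ¬ (2*k+2 ≤ blockIdx n) := by
      rw [le_blockIdx_iff]; omega
    have h2 : ¬ (2*k+1 ≤ blockIdx n) := by
      intro h
      have : blockIdx n = 2*k+1 := by omega
      unfold PX at hP
      rw [this, Nat.even_iff] at hP
      omega
    rw [le_blockIdx_iff] at h2
    omega
  calc _ ≤ (Finset.range (2 ^ ((2*k+1)*(2*k+1)) - 1)).card := Finset.card_le_card this
    _ = _ := Finset.card_range _

lemma countY (k : ℕ) :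
    ((Finset.range (2 ^ ((2*k+1)*(2*k+1)) - 1)).filter (fun n => ¬ PX n)).card
      ≤ 2 ^ ((2*k)*(2*k)) - 1 := by
  have : (Finset.range (2 ^ ((2*k+1)*(2*k+1)) - 1)).filter (fun n => ¬ PX n)
      ⊆ Finset.range (2 ^ ((2*k)*(2*k)) - 1) := by
    intro n hn
    rw [Finset.mem_filter, Finset.mem_range] at hn
    obtain ⟨hlt, hP⟩ := hn
    rw [Finset.mem_range]
    have h1 : ¬ (2*k+1 ≤ blockIdx n) := by
      rw [le_blockIdx_iff]; omega
    have h2 : ¬ (2*k ≤ blockIdx n) := by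
      intro h
      have : blockIdx n = 2*k := by omega
      exact hP (by rw [PX, this]; exact even_two_mul k)
    rw [le_blockIdx_iff] at h2
    omega
  calc _ ≤ (Finset.range (2 ^ ((2*k)*(2*k)) - 1)).card := Finset.card_le_card this
    _ = _ := Finset.card_range _

-- growth
lemma tendsto_growth {p q : ℕ → ℕ} (hp : ∀ k, k ≤ p k) (hpq : ∀ k, p k + (k+1) ≤ q k)
    (d : ℝ) (hd : 0 < d) :
    Tendsto (fun k => ((2 ^ (p k) - 1 : ℕ) : ℝ) - d * ((2 ^ (q k) - 1 : ℕ) : ℝ)) atTop atBot := by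
  -- eventually bounded above by d - 2^k, which tends to -∞
  have hbig : ∀ᶠ k in atTop, d * 2 ^ (k+1) ≥ 2 := by
    have : Tendsto (fun k : ℕ => d * 2 ^ (k+1)) atTop atTop := by
      apply Tendsto.const_mul_atTop hd
      exact (tendsto_pow_atTop_atTop_of_one_lt (by norm_num : (1:ℝ) < 2)).comp
        (tendsto_add_atTop_nat 1)
    exact this.eventually_ge_atTop 2
  apply tendsto_atBot_mono' atTop (f₁ := fun k => d - (2:ℝ) ^ k)
  · filter_upwards [hbig] with k hk
    have hcast : ∀ m : ℕ, ((2 ^ m - 1 : ℕ) : ℝ) = 2 ^ m - 1 := by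
      intro m
      have : (1:ℕ) ≤ 2 ^ m := Nat.one_le_two_pow
      push_cast [this]
      ring
    rw [hcast, hcast]
    have h1 : (2:ℝ) ^ (q k) ≥ 2 ^ (p k) * 2 ^ (k+1) := by
      rw [← pow_add]
      exact pow_le_pow_right₀ (by norm_num) (hpq k)
    have h2 : (2:ℝ) ^ k ≤ 2 ^ (p k) := pow_le_pow_right₀ (by norm_num) (hp k)
    nlinarith [pow_pos (by norm_num : (0:ℝ) < 2) (p k), pow_pos (by norm_num : (0:ℝ) < 2) (q k)]
  · apply tendsto_atBot_add_const_left
    rw [tendsto_neg_atBot_iff]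
    exact tendsto_pow_atTop_atTop_of_one_lt (by norm_num : (1:ℝ) < 2)


noncomputable def dig (t : ℝ) (n : ℕ) : Bool := decide (⌊t * 2^(n+1)⌋ % 2 = 1)

lemma dig_partial (t : ℝ) (ht0 : 0 ≤ t) (ht1 : t < 1) (N : ℕ) :
    ∑ n ∈ Finset.range N, cond (dig t n) ((2:ℝ)⁻¹ ^ (n+1)) 0
      = (⌊t * 2^N⌋ : ℝ) / 2^N := by
  induction N with
  | zero =>
    simp only [Finset.sum_range_zero, pow_zero, mul_one]
    rw [Int.floor_eq_zero_iff.2 ⟨ht0, ht1⟩]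
    simp
  | succ N ih =>
    rw [Finset.sum_range_succ, ih]
    set u : ℝ := t * 2^N with hu
    have hfl : (⌊u⌋ : ℝ) ≤ u := Int.floor_le u
    have hfl' : u < ⌊u⌋ + 1 := Int.lt_floor_add_one u
    have h2u : t * 2^(N+1) = 2 * u := by rw [hu]; ring
    set r : ℤ := ⌊t * 2^(N+1)⌋ - 2 * ⌊u⌋ with hr
    have hr0 : 0 ≤ r := by
      rw [hr, sub_nonneg, h2u]
      apply Int.le_floor.2
      push_cast
      linarith
    have hr1 : r ≤ 1 := by
      rw [hr, sub_le_iff_le_add, h2u]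
      have : (2:ℝ) * u < 2 * ⌊u⌋ + 2 := by linarith
      have := Int.floor_lt.2 (by push_cast; linarith : (2:ℝ) * u < ((2 * ⌊u⌋ + 2 : ℤ) : ℝ))
      omega
    have hfloor : ⌊t * 2^(N+1)⌋ = 2 * ⌊u⌋ + r := by omega
    have hdig : dig t N = decide (r = 1) := by
      rw [dig, hfloor]
      congr 1
      simp only [eq_iff_iff]
      omega
    rcases (by omega : r = 0 ∨ r = 1) with h | h
    · rw [hdig, h]
      norm_num
      rw [hfloor, h]
      push_cast
      field_simp
      ring
    · rw [hdig, h]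
      norm_num
      rw [hfloor, h]
      push_cast
      field_simp
      have h2N : (2:ℝ)^N * (1/2)^(N+1) * 2^(N+1) = 2^N := by
        rw [mul_assoc, div_pow, one_pow, one_div_mul_cancel (by positivity), mul_one]
      linear_combination h2N
  
lemma hasSum_dig (t : ℝ) (ht0 : 0 ≤ t) (ht1 : t < 1) :
    HasSum (fun n => cond (dig t n) ((2:ℝ)⁻¹ ^ (n+1)) 0) t := by
  have hs := summable_fB (dig t)
  have hts := hs.hasSum
  -- partial sums tend to t
  have hten : Tendsto (fun N => ∑ n ∈ Finset.range N, cond (dig t n) ((2:ℝ)⁻¹ ^ (n+1)) 0)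
      atTop (𝓝 t) := by
    have heq : ∀ N, ∑ n ∈ Finset.range N, cond (dig t n) ((2:ℝ)⁻¹ ^ (n+1)) 0
        = (⌊t * 2^N⌋ : ℝ) / 2^N := fun N => dig_partial t ht0 ht1 N
    simp only [heq]
    apply tendsto_of_tendsto_of_tendsto_of_le_of_le
      (g := fun N : ℕ => t - (2:ℝ)⁻¹ ^ N) (h := fun _ => t)
    · have : Tendsto (fun N : ℕ => (2:ℝ)⁻¹ ^ N) atTop (𝓝 0) :=
        tendsto_pow_atTop_nhds_zero_of_lt_one (by norm_num) (by norm_num)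
      simpa using (tendsto_const_nhds (x := t)).sub this
    · exact tendsto_const_nhds
    · intro N
      have h1 : t * 2^N < ⌊t * 2^N⌋ + 1 := Int.lt_floor_add_one _
      have hp : (0:ℝ) < 2^N := by positivity
      show t - (2:ℝ)⁻¹ ^ N ≤ (⌊t * 2^N⌋ : ℝ) / 2^N
      rw [sub_le_iff_le_add, div_add' _ _ _ (ne_of_gt hp), le_div_iff₀ hp]
      have : (2:ℝ)⁻¹ ^ N * 2 ^ N = 1 := by
        rw [← mul_pow]; norm_num
      nlinarith
    · intro N
      have h0 : (⌊t * 2^N⌋ : ℝ) ≤ t * 2^N := Int.floor_le _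
      have hp : (0:ℝ) < 2^N := by positivity
      rw [div_le_iff₀ hp]
      linarith
  have := hts.tendsto_sum_nat
  have huniq : ∑' n, cond (dig t n) ((2:ℝ)⁻¹ ^ (n+1)) 0 = t :=
    tendsto_nhds_unique this hten
  rwa [huniq] at hts

lemma hasSum_one : HasSum (fun n : ℕ => cond ((fun _ => true) n) ((2:ℝ)⁻¹ ^ (n+1)) 0) 1 := by
  simp only [cond_true]
  have := hasSum_geometric_two' 1
  simpa [pow_succ, one_div, div_eq_mul_inv, mul_comm, pow_mul] using this

lemma exists_expansion (t : ℝ) (ht : t ∈ Set.Icc (0:ℝ) 1) :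
    ∃ a : ℕ → Bool, HasSum (fun n => cond (a n) ((2:ℝ)⁻¹ ^ (n+1)) 0) t := by
  rcases eq_or_lt_of_le ht.2 with h | h
  · exact ⟨fun _ => true, h ▸ hasSum_one⟩
  · exact ⟨dig t, hasSum_dig t ht.1 h⟩

/-- There are compact sets `X, Y ⊆ ℝ` of Hausdorff dimension zero
whose difference set `X - Y` contains the interval `[0,1]`. -/
theorem exists_zero_dim_sets_difference_contains_interval :
    ∃ X Y : Set ℝ, IsCompact X ∧ IsCompact Y ∧ dimH X = 0 ∧ dimH Y = 0 ∧
      Set.Icc (0:ℝ) 1 ⊆ {d : ℝ | ∃ x ∈ X, ∃ y ∈ Y, d = x - y} := by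
  refine ⟨DSet PX, (fun r : ℝ => -r) '' DSet (fun n => ¬ PX n), isCompact_DSet _,
    ((isCompact_DSet _).image continuous_neg), ?_, ?_, ?_⟩
  · -- dimH X = 0
    apply dimH_DSet_eq_zero PX (fun k => 2 ^ ((2*k+2)*(2*k+2)) - 1)
      (fun k => 2 ^ ((2*k+1)*(2*k+1)) - 1)
    · apply tendsto_atTop_mono (fun k => ?_) tendsto_id
      have h1 : k < 2 ^ k := k.lt_two_pow_self
      have h2 : (2:ℕ) ^ k ≤ 2 ^ ((2*k+2)*(2*k+2)) := Nat.pow_le_pow_right (by norm_num) (by nlinarith)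
      simp only [id]
      omega
    · exact countX
    · intro d hd
      exact tendsto_growth (fun k => by nlinarith) (fun k => by nlinarith) d hd
  · -- dimH Y = 0
    have hA : dimH (DSet (fun n => ¬ PX n)) = 0 := by
      apply dimH_DSet_eq_zero _ (fun k => 2 ^ ((2*k+1)*(2*k+1)) - 1)
        (fun k => 2 ^ ((2*k)*(2*k)) - 1)
      · apply tendsto_atTop_mono (fun k => ?_) tendsto_id
        have h1 : k < 2 ^ k := k.lt_two_pow_self
        have h2 : (2:ℕ) ^ k ≤ 2 ^ ((2*k+1)*(2*k+1)) := Nat.pow_le_pow_right (by norm_num) (by nlinarith)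
        simp only [id]
        omega
      · exact countY
      · intro d hd
        exact tendsto_growth (fun k => by nlinarith) (fun k => by nlinarith) d hd
    have hlip : LipschitzWith 1 (fun x : ℝ => -x) := by
      apply LipschitzWith.of_dist_le_mul
      intro a b
      simp [dist_neg_neg]
    exact le_antisymm ((hlip.dimH_image_le _).trans_eq hA) zero_le
  · -- coverage
    intro t ht
    obtain ⟨a, ha⟩ := exists_expansion t ht
    set aX : ℕ → Bool := fun n => a n && decide (PX n) with haX
    set aY : ℕ → Bool := fun n => a n && !(decide (PX n)) with haY
    have hX : HasSum (fun n => cond (aX n) ((2:ℝ)⁻¹ ^ (n+1)) 0) (valB aX) :=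
      (summable_fB aX).hasSum
    have hY : HasSum (fun n => cond (aY n) ((2:ℝ)⁻¹ ^ (n+1)) 0) (valB aY) :=
      (summable_fB aY).hasSum
    have hadd : ∀ n, cond (aX n) ((2:ℝ)⁻¹ ^ (n+1)) 0 + cond (aY n) ((2:ℝ)⁻¹ ^ (n+1)) 0
        = cond (a n) ((2:ℝ)⁻¹ ^ (n+1)) 0 := by
      intro n
      rw [haX, haY]
      cases h : a n <;> cases h2 : decide (PX n) <;> simp [h, h2]
    have hsum : HasSum (fun n => cond (a n) ((2:ℝ)⁻¹ ^ (n+1)) 0) (valB aX + valB aY) := by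
      have := hX.add hY
      simpa only [hadd] using this
    have ht' : t = valB aX + valB aY := ha.unique hsum
    refine ⟨valB aX, ⟨aX, fun n hn => ?_, rfl⟩, -(valB aY),
      ⟨valB aY, ⟨aY, fun n hn => ?_, rfl⟩, rfl⟩, by linarith⟩
    · rw [haX]
      simp [decide_eq_false hn]
    · rw [haY]
      have : PX n := not_not.mp hn
      simp [this]
end

section
/- Let A = C × {0} ⊆ ℝ² where C ⊆ ℝ is a compact set with dim C = 1 and H¹(C) = 0. Then dim A = 1 = n/2 (n = 2), and for every a ∈ A, the pinned dot product set Π_0^a(A) := {a·y : y ∈ A} satisfies H¹(Π_0^a(A)) = 0. Hence the threshold n/2 in the pinned dot product conjecture cannot be lowered when n = 2. -/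
open MeasureTheory Set
open scoped ENNReal

lemma emb_isometry : Isometry (fun c : ℝ => (WithLp.equiv 2 (Fin 2 → ℝ)).symm ![c, 0]) := by
  intro x y
  simp [edist_dist, EuclideanSpace.dist_eq, Fin.sum_univ_two, Real.dist_eq,
    Real.sqrt_sq_eq_abs, sq_abs]

/-- sharpness in the plane: Let `C ⊆ ℝ` be compact with
`dim C = 1` and `H¹(C) = 0`, and let `A = C × {0} ⊆ ℝ²`. Then `dim A = 1 = n/2`
and for every `a ∈ A` the pinned dot product set `Π_0^a(A) = {a·y : y ∈ A}` has
`H¹` measure zero. -/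
theorem sharpness_example_plane (C : Set ℝ) (hC : IsCompact C)
    (hdimC : dimH C = 1) (hmeasC : μH[1] C = 0) :
    dimH ((fun c : ℝ => (WithLp.equiv 2 (Fin 2 → ℝ)).symm ![c, 0]) '' C) = 1 ∧
    ∀ a ∈ (fun c : ℝ => (WithLp.equiv 2 (Fin 2 → ℝ)).symm ![c, 0]) '' C,
      μH[1] {α : ℝ | ∃ y ∈ (fun c : ℝ => (WithLp.equiv 2 (Fin 2 → ℝ)).symm ![c, 0]) '' C,
        (inner ℝ a y : ℝ) = α} = 0 := by
  constructor
  · rw [emb_isometry.dimH_image, hdimC]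
  · rintro a ⟨a₁, ha₁, rfl⟩
    have hset : {α : ℝ | ∃ y ∈ (fun c : ℝ => (WithLp.equiv 2 (Fin 2 → ℝ)).symm ![c, 0]) '' C,
        (inner ℝ ((fun c : ℝ => (WithLp.equiv 2 (Fin 2 → ℝ)).symm ![c, 0]) a₁) y : ℝ) = α}
        = (fun x : ℝ => a₁ * x) '' C := by
      ext α
      constructor
      · rintro ⟨y, ⟨c, hc, rfl⟩, hinner⟩
        refine ⟨c, hc, ?_⟩
        rw [← hinner]
        simp [PiLp.inner_apply, Fin.sum_univ_two, mul_comm]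
      · rintro ⟨c, hc, rfl⟩
        exact ⟨_, ⟨c, hc, rfl⟩, by simp [PiLp.inner_apply, Fin.sum_univ_two, mul_comm]⟩
    rw [hset]
    have hlip : LipschitzWith ⟨|a₁|, abs_nonneg _⟩ (fun x : ℝ => a₁ * x) := by
      intro x y
      simp [edist_dist, Real.dist_eq, ← mul_sub, abs_mul, ENNReal.ofReal_mul (abs_nonneg a₁), ENNReal.ofReal_eq_coe_nnreal]
      exact le_rfl
    have := hlip.hausdorffMeasure_image_le (d := 1) zero_le_one C
    rw [hmeasC, mul_zero] at this
    exact le_antisymm this zero_le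
end
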